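/- (Fatou's lemma over number fields) Let K be a number field with ring of integers O_K, and let f be a formal power series with all coefficients in O_K which equals a rational function g(x)/h(x) with g, h ∈ K[x] coprime and h(0) = 1. Then g and h both have all coefficients in O_K. -/

import Mathlib

open PowerSeries

open scoped Multiplicative WithZero
open Polynomial IsDedekindDomain IsDedekindDomain.HeightOneSpectrum UniqueFactorizationMonoid

theorem fatou_dvd_of_forall_intValuation_le {R : Type*} [CommRing R] [IsDedekindDomain R]
    {a b : R} (hb : b ≠ 0)
    (h : ∀ v : HeightOneSpectrum R, v.intValuation a ≤ v.intValuation b) : b ∣ a := by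
  classical
  rcases eq_or_ne a 0 with rfl | ha
  · exact dvd_zero b
  have hsa : Ideal.span {a} ≠ (0 : Ideal R) := by
    simpa [Ideal.span_singleton_eq_bot] using ha
  have hsb : Ideal.span {b} ≠ (0 : Ideal R) := by
    simpa [Ideal.span_singleton_eq_bot] using hb
  rw [← Ideal.span_singleton_le_span_singleton, ← Ideal.dvd_iff_le,
    dvd_iff_normalizedFactors_le_normalizedFactors hsb hsa, Multiset.le_iff_count]
  intro P
  by_cases hP : P ∈ normalizedFactors (Ideal.span {b})
  · have hPirr : Irreducible P := irreducible_of_normalized_factor P hP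
    have hPprime : Prime P := prime_of_normalized_factor P hP
    set v : HeightOneSpectrum R :=
      ⟨P, Ideal.isPrime_of_prime hPprime, hPprime.ne_zero⟩ with hv
    set n : ℕ := Multiset.count P (normalizedFactors (Ideal.span {b})) with hn
    have h1 : emultiplicity P (Ideal.span {b}) = n := by
      rw [hn, emultiplicity_eq_count_normalizedFactors hPirr hsb, normalize_eq]
    have h2 : P ^ n ∣ Ideal.span {b} := pow_dvd_of_le_emultiplicity h1.ge
    have h3 : v.intValuation b ≤ WithZero.exp (-(n : ℤ)) :=
      (v.intValuation_le_pow_iff_dvd b n).mpr h2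
    have h4 : P ^ n ∣ Ideal.span {a} :=
      (v.intValuation_le_pow_iff_dvd a n).mp ((h v).trans h3)
    have h5 : (n : ℕ∞) ≤ emultiplicity P (Ideal.span {a}) := le_emultiplicity_of_pow_dvd h4
    rwa [emultiplicity_eq_count_normalizedFactors hPirr hsa, normalize_eq, Nat.cast_le] at h5
  · simp [Multiset.count_eq_zero_of_notMem hP]

theorem fatou_mem_range_of_forall_valuation_le_one {R : Type*} [CommRing R] [IsDedekindDomain R]
    {K : Type*} [Field K] [Algebra R K] [IsFractionRing R K] {x : K}
    (hx : ∀ v : HeightOneSpectrum R, v.valuation K x ≤ 1) :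
    ∃ r : R, algebraMap R K r = x := by
  obtain ⟨⟨a, s⟩, rfl⟩ := IsLocalization.mk'_surjective (nonZeroDivisors R) x
  have hs : (s : R) ≠ 0 := nonZeroDivisors.coe_ne_zero s
  have key : ∀ v : HeightOneSpectrum R, v.intValuation a ≤ v.intValuation (s : R) := by
    intro v
    have h1 := hx v
    rw [valuation_of_mk' v] at h1
    have hsv : v.intValuation (s : R) ≠ 0 := v.intValuation_ne_zero _ hs
    have := mul_le_mul_left h1 (v.intValuation (s : R))
    rwa [div_mul_cancel₀ _ hsv, one_mul] at this
  obtain ⟨c, rfl⟩ := fatou_dvd_of_forall_intValuation_le hs key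
  refine ⟨c, ?_⟩
  rw [eq_comm, IsLocalization.mk'_eq_iff_eq_mul, mul_comm, ← map_mul]

theorem fatou_zm0_no_limit {c C u : ℤᵐ⁰} (hc : c ≠ 0) (hu : u < 1)
    (h : ∀ N : ℕ, c ≤ C * u ^ N) : False := by
  rcases eq_or_ne u 0 with rfl | hu0
  · have := h 1
    simp at this
    exact hc this
  rcases eq_or_ne C 0 with rfl | hC0
  · have := h 0
    simp at this
    exact hc this
  obtain ⟨zu, rfl⟩ : ∃ z : ℤ, u = WithZero.exp z := ⟨WithZero.log u, (WithZero.exp_log hu0).symm⟩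
  obtain ⟨zC, rfl⟩ : ∃ z : ℤ, C = WithZero.exp z := ⟨WithZero.log C, (WithZero.exp_log hC0).symm⟩
  obtain ⟨zc, rfl⟩ : ∃ z : ℤ, c = WithZero.exp z := ⟨WithZero.log c, (WithZero.exp_log hc).symm⟩
  have hu1 : zu ≤ -1 := by
    rw [← WithZero.exp_zero, WithZero.exp_lt_exp] at hu
    omega
  set N : ℕ := (zC - zc).toNat + 1 with hN
  have h3 : zc ≤ zC + (N : ℤ) * zu := by
    have := h N
    rw [← WithZero.exp_nsmul, ← WithZero.exp_add, WithZero.exp_le_exp, nsmul_eq_mul] at this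
    exact this
  have h4 : (N : ℤ) * zu ≤ -(N : ℤ) := by nlinarith [Int.natCast_nonneg N]
  omega

theorem fatou_no_small_root {L : Type*} [Field L] (w : Valuation L ℤᵐ⁰)
    (g h : Polynomial L) (f : PowerSeries L) (hcop : IsCoprime g h)
    (hf : ∀ n, w (PowerSeries.coeff n f) ≤ 1)
    (hgh : (g : PowerSeries L) = (h : PowerSeries L) * f)
    {β : L} (hroot : h.eval β = 0) (hβ : w β < 1) : False := by
  classical
  obtain ⟨a, b, hab⟩ := hcop
  have hgb : g.eval β ≠ 0 := by
    intro h0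
    have := congrArg (Polynomial.eval β) hab
    simp [h0, hroot] at this
  have hc : w (g.eval β) ≠ 0 := by
    simpa [Valuation.zero_iff] using hgb
  set C : ℤᵐ⁰ := ((Finset.range (g.natDegree + 1)).sup fun i => w (g.coeff i)) ⊔
      ((Finset.range (h.natDegree + 1)).sup fun i => w (h.coeff i)) with hC
  have hgC : ∀ i, w (g.coeff i) ≤ C := by
    intro i
    rcases le_or_gt i g.natDegree with hi | hi
    · exact le_sup_of_le_left (Finset.le_sup (f := fun i => w (g.coeff i))
        (Finset.mem_range.mpr (Nat.lt_succ_of_le hi)))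
    · rw [g.coeff_eq_zero_of_natDegree_lt hi]
      simp
  have hhC : ∀ i, w (h.coeff i) ≤ C := by
    intro i
    rcases le_or_gt i h.natDegree with hi | hi
    · exact le_sup_of_le_right (Finset.le_sup (f := fun i => w (h.coeff i))
        (Finset.mem_range.mpr (Nat.lt_succ_of_le hi)))
    · rw [h.coeff_eq_zero_of_natDegree_lt hi]
      simp
  refine fatou_zm0_no_limit (C := C) hc hβ fun N => ?_
  set r : Polynomial L := g - h * (PowerSeries.trunc N f) with hr
  have hrlow : ∀ m, m < N → r.coeff m = 0 := by
    intro m hm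
    have h1 : g.coeff m = ∑ ij ∈ Finset.HasAntidiagonal.antidiagonal m, h.coeff ij.1 *
        (PowerSeries.coeff ij.2 f) := by
      have := congrArg (PowerSeries.coeff m) hgh
      rw [Polynomial.coeff_coe, PowerSeries.coeff_mul] at this
      simp only [Polynomial.coeff_coe] at this
      exact this
    rw [hr, Polynomial.coeff_sub, Polynomial.coeff_mul, h1]
    rw [sub_eq_zero]
    apply Finset.sum_congr rfl
    intro ij hij
    rw [Finset.HasAntidiagonal.mem_antidiagonal] at hij
    rw [PowerSeries.coeff_trunc]
    rw [if_pos (by omega)]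
  have hrC : ∀ m, w (r.coeff m) ≤ C := by
    intro m
    rw [hr, Polynomial.coeff_sub, Polynomial.coeff_mul]
    refine w.map_sub_le (hgC m) (w.map_sum_le fun ij _ => ?_)
    rw [Valuation.map_mul]
    calc w (h.coeff ij.1) * w ((PowerSeries.trunc N f).coeff ij.2)
        ≤ C * 1 := by
          apply mul_le_mul' (hhC _)
          rw [PowerSeries.coeff_trunc]
          split
          · exact hf _
          · simp
      _ = C := mul_one C
  have hev : r.eval β = g.eval β := by
    rw [hr, Polynomial.eval_sub, Polynomial.eval_mul, hroot, zero_mul, sub_zero]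
  rw [← hev, Polynomial.eval_eq_sum, Polynomial.sum_def]
  refine w.map_sum_le fun m hm => ?_
  have hmN : N ≤ m := by
    by_contra hlt
    exact (Polynomial.mem_support_iff.mp hm) (hrlow m (by omega))
  rw [Valuation.map_mul, Valuation.map_pow]
  calc w (r.coeff m) * w β ^ m ≤ C * w β ^ m := mul_le_mul_left (hrC m) _
    _ ≤ C * w β ^ N := by
        apply mul_le_mul_right
        have : w β ^ m = w β ^ N * w β ^ (m - N) := by
          rw [← pow_add]; congr 1; omega
        rw [this]
        calc w β ^ N * w β ^ (m - N) ≤ w β ^ N * 1 :=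
              mul_le_mul_right (pow_le_one' hβ.le _) _
          _ = w β ^ N := mul_one _

theorem fatou_coeff_prod_one_sub_le {L : Type*} [Field L] (w : Valuation L ℤᵐ⁰)
    (s : Multiset L) (hs : ∀ γ ∈ s, w γ ≤ 1) (i : ℕ) :
    w (((s.map fun γ => 1 - Polynomial.C γ * Polynomial.X).prod).coeff i) ≤ 1 := by
  classical
  induction s using Multiset.induction generalizing i with
  | empty =>
    simp only [Multiset.map_zero, Multiset.prod_zero, Polynomial.coeff_one]
    split <;> simp
  | cons γ s ih =>
    have hγ : w γ ≤ 1 := hs γ (Multiset.mem_cons_self γ s)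
    have hs' : ∀ γ' ∈ s, w γ' ≤ 1 := fun γ' hγ' => hs γ' (Multiset.mem_cons_of_mem hγ')
    rw [Multiset.map_cons, Multiset.prod_cons, Polynomial.coeff_mul]
    refine w.map_sum_le fun ij _ => ?_
    rw [Valuation.map_mul]
    have h1 : w ((1 - Polynomial.C γ * Polynomial.X).coeff ij.1) ≤ 1 := by
      match hij : ij.1 with
      | 0 => simp [Polynomial.coeff_one]
      | 1 => simpa [Polynomial.coeff_one] using hγ
      | (n+2) => simp [Polynomial.coeff_one]
    calc w ((1 - Polynomial.C γ * Polynomial.X).coeff ij.1) * w ((Multiset.map (fun γ => 1 - Polynomial.C γ * Polynomial.X) s).prod.coeff ij.2)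
        ≤ 1 * 1 := mul_le_mul' h1 (ih hs' ij.2)
      _ = 1 := mul_one 1

theorem fatou_coeff_le_one_of_roots {L : Type*} [Field L] (w : Valuation L ℤᵐ⁰)
    (h : Polynomial L) (hsplit : h.Splits) (h0 : h.coeff 0 = 1)
    (hroots : ∀ β ∈ h.roots, 1 ≤ w β) (i : ℕ) : w (h.coeff i) ≤ 1 := by
  classical
  have hne : h ≠ 0 := fun hh => by simp [hh] at h0
  have hroot0 : ∀ β ∈ h.roots, β ≠ 0 := by
    intro β hβ h0'
    subst h0'
    have := Polynomial.isRoot_of_mem_roots hβ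
    rw [Polynomial.IsRoot, ← Polynomial.coeff_zero_eq_eval_zero, h0] at this
    exact one_ne_zero this
  have hfac := hsplit.eq_prod_roots
  have hstep : (h.roots.map fun a => Polynomial.X - Polynomial.C a) =
      h.roots.map fun a => Polynomial.C (-a) * (1 - Polynomial.C a⁻¹ * Polynomial.X) := by
    apply Multiset.map_congr rfl
    intro β hβ
    have hβ0 : β ≠ 0 := hroot0 β hβ
    have hX : Polynomial.C (-β) * ((1 : Polynomial L) - Polynomial.C β⁻¹ * Polynomial.X) = Polynomial.C (-β) - Polynomial.C (-β) * Polynomial.C β⁻¹ * Polynomial.X := by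
      ring
    rw [hX, ← Polynomial.C_mul, neg_mul, mul_inv_cancel₀ hβ0]
    simp only [map_neg, Polynomial.C_1, neg_neg, neg_mul, one_mul]
    ring
  rw [hstep] at hfac
  rw [Multiset.prod_map_mul] at hfac
  set P : Polynomial L := (h.roots.map fun a => 1 - Polynomial.C a⁻¹ * Polynomial.X).prod with hP
  have hCprod : (h.roots.map fun a => Polynomial.C (-a)).prod = Polynomial.C ((h.roots.map fun a => -a).prod) := by
    rw [map_multiset_prod, Multiset.map_map]
    rfl
  rw [hCprod, ← mul_assoc, ← Polynomial.C_mul] at hfac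
  set u : L := h.leadingCoeff * (h.roots.map fun a => -a).prod with hu
  have hPeval : P.eval 0 = 1 := by
    rw [hP, Polynomial.eval_multiset_prod, Multiset.map_map]
    have heq : Multiset.map ((fun p => Polynomial.eval 0 p) ∘ fun a => 1 - Polynomial.C a⁻¹ * Polynomial.X) h.roots =
        Multiset.map (fun _ => (1 : L)) h.roots :=
      Multiset.map_congr rfl (fun β _ => by simp)
    rw [heq]
    simp
  have hu1 : u = 1 := by
    have := congrArg (Polynomial.eval 0) hfac
    rw [← Polynomial.coeff_zero_eq_eval_zero, h0, Polynomial.eval_mul, Polynomial.eval_C,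
      hPeval, mul_one] at this
    exact this.symm
  rw [hu1, Polynomial.C_1, one_mul] at hfac
  rw [hfac]
  have hrw : (h.roots.map fun a => 1 - Polynomial.C a⁻¹ * Polynomial.X) =
      ((h.roots.map fun a => a⁻¹).map fun γ => 1 - Polynomial.C γ * Polynomial.X) := by
    rw [Multiset.map_map]
    rfl
  rw [hP, hrw]
  refine fatou_coeff_prod_one_sub_le w _ ?_ i
  intro γ hγ
  obtain ⟨β, hβ, rfl⟩ := Multiset.mem_map.mp hγ
  have hβ0 : β ≠ 0 := hroot0 β hβ
  have h1 : (1 : ℤᵐ⁰) ≤ w β := hroots β hβ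
  rw [map_inv₀]
  exact inv_le_one_of_one_le₀ h1

/-- (Fatou's lemma over number fields) Let `K` be a number field, and `g, h ∈ K[x]`
coprime with `h(0) = 1`, such that the power series expansion of `g/h` has all its
coefficients in `O_K`. Then all coefficients of `g` and `h` lie in `O_K`. -/
theorem fatou_lemma (K : Type*) [Field K] [NumberField K]
    (g h : Polynomial K) (hcop : IsCoprime g h) (h0 : h.coeff 0 = 1)
    (hint : ∀ n : ℕ, IsIntegral ℤ
      ((PowerSeries.coeff n) ((g : PowerSeries K) * (h : PowerSeries K)⁻¹))) :
    (∀ n : ℕ, IsIntegral ℤ (g.coeff n)) ∧ (∀ n : ℕ, IsIntegral ℤ (h.coeff n)) := by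
  classical
  set f : PowerSeries K := (g : PowerSeries K) * (h : PowerSeries K)⁻¹ with hfdef
  have hconst : PowerSeries.constantCoeff (h : PowerSeries K) ≠ 0 := by
    rw [Polynomial.constantCoeff_coe, h0]
    exact one_ne_zero
  have hmulf : (g : PowerSeries K) = (h : PowerSeries K) * f := by
    rw [hfdef, mul_comm (g : PowerSeries K), ← mul_assoc,
      PowerSeries.mul_inv_cancel _ hconst, one_mul]
  set L := h.SplittingField with hL
  haveI : NumberField L := NumberField.of_module_finite K L
  set σ : K →+* L := algebraMap K L with hσ
  set g' : Polynomial L := g.map σ with hg'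
  set h' : Polynomial L := h.map σ with hh'
  set f' : PowerSeries L := PowerSeries.map σ f with hf'
  have hcoe : ∀ p : Polynomial K,
      ((p.map σ : Polynomial L) : PowerSeries L) = PowerSeries.map σ (p : PowerSeries K) :=
    fun p => PowerSeries.ext fun n => by
      simp [Polynomial.coeff_coe, PowerSeries.coeff_map]
  have hgh' : (g' : PowerSeries L) = (h' : PowerSeries L) * f' := by
    rw [hg', hh', hf', hcoe, hcoe, ← map_mul, ← hmulf]
  have hcop' : IsCoprime g' h' := hcop.map (Polynomial.mapRingHom σ)
  have h0' : h'.coeff 0 = 1 := by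
    rw [hh', Polynomial.coeff_map, h0, map_one]
  have hsplit' : h'.Splits :=
    Polynomial.SplittingField.splits h
  have hint' : ∀ n, IsIntegral ℤ (PowerSeries.coeff n f') := by
    intro n
    rw [hf', PowerSeries.coeff_map]
    exact (hint n).map σ.toIntAlgHom
  -- valuation bounds for integral elements
  have hval : ∀ x : L, IsIntegral ℤ x →
      ∀ v : HeightOneSpectrum (NumberField.RingOfIntegers L), v.valuation L x ≤ 1 := by
    intro x hx v
    have := v.valuation_le_one (K := L) (⟨x, hx⟩ : NumberField.RingOfIntegers L)
    exact this
  -- all roots of h' have valuation ≥ 1, hence coefficient bounds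
  have hcoeffs : ∀ v : HeightOneSpectrum (NumberField.RingOfIntegers L),
      (∀ i, v.valuation L (h'.coeff i) ≤ 1) ∧ (∀ i, v.valuation L (g'.coeff i) ≤ 1) := by
    intro v
    set w : Valuation L ℤᵐ⁰ := v.valuation L with hw
    have hfw : ∀ n, w (PowerSeries.coeff n f') ≤ 1 := fun n => hval _ (hint' n) v
    have hroots : ∀ β ∈ h'.roots, 1 ≤ w β := by
      intro β hβ
      by_contra hlt
      exact fatou_no_small_root w g' h' f' hcop' hfw hgh'
        (Polynomial.isRoot_of_mem_roots hβ) (lt_of_not_ge hlt)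
    have hhb : ∀ i, w (h'.coeff i) ≤ 1 :=
      fun i => fatou_coeff_le_one_of_roots w h' hsplit' h0' hroots i
    refine ⟨hhb, fun n => ?_⟩
    have h1 : g'.coeff n = ∑ ij ∈ Finset.HasAntidiagonal.antidiagonal n, h'.coeff ij.1 *
        (PowerSeries.coeff ij.2 f') := by
      have := congrArg (PowerSeries.coeff n) hgh'
      rw [Polynomial.coeff_coe, PowerSeries.coeff_mul] at this
      simp only [Polynomial.coeff_coe] at this
      exact this
    rw [h1]
    refine w.map_sum_le fun ij _ => ?_
    rw [Valuation.map_mul]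
    exact mul_le_one' (hhb ij.1) (hfw ij.2)
  -- descend integrality from L to K
  have hdescend : ∀ x : K, (∀ v : HeightOneSpectrum (NumberField.RingOfIntegers L),
      v.valuation L (σ x) ≤ 1) → IsIntegral ℤ x := by
    intro x hx
    obtain ⟨r, hr⟩ := fatou_mem_range_of_forall_valuation_le_one (K := L) hx
    have h2 : IsIntegral ℤ (σ x) := by
      rw [← hr]
      exact NumberField.RingOfIntegers.isIntegral_coe r
    have hinj : Function.Injective (algebraMap K L) := (algebraMap K L).injective
    exact (isIntegral_algebraMap_iff hinj).mp h2
  constructor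
  · intro n
    refine hdescend _ fun v => ?_
    have := (hcoeffs v).2 n
    rwa [hg', Polynomial.coeff_map] at this
  · intro n
    refine hdescend _ fun v => ?_
    have := (hcoeffs v).1 n
    rwa [hh', Polynomial.coeff_map] at this
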